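/- Let Y be a finite set with |Y| = c, M ≥ 1, and σ : Y^M → S a function that is M-unambiguous, meaning for any two distinct diagonal vectors (y,...,y) and (y',...,y') with y ≠ y' we have σ(y,...,y) ≠ σ(y',...,y'). Let D be a distribution on X × Y, let f : X → Y be a classifier, define R^{01}(f) = P_{(x,y)~D}(f(x) ≠ y) and R_P(f) = P(σ(f(X_1),...,f(X_M)) ≠ σ(Y_1,...,Y_M)) where (X_i,Y_i) are i.i.d. from D. Then R^{01}(f) ≤ (c^{2M-2} · R_P(f))^{1/M}. -/

import Mathlib

open scoped ENNReal

/-- Power mean inequality for finite sums in `ℝ≥0∞` (finite terms). -/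
lemma pm_aux {ι : Type*} (s : Finset ι) (a : ι → ℝ≥0∞) (h : ∀ i ∈ s, a i ≠ ∞) (n : ℕ) :
    (∑ i ∈ s, a i) ^ (n + 1) ≤ (s.card : ℝ≥0∞) ^ n * ∑ i ∈ s, a i ^ (n + 1) := by
  have h1 : (∑ i ∈ s, a i) = (((∑ i ∈ s, (a i).toNNReal : NNReal)) : ℝ≥0∞) := by
    rw [ENNReal.coe_finset_sum]
    exact Finset.sum_congr rfl fun i hi => (ENNReal.coe_toNNReal (h i hi)).symm
  have h2 : (∑ i ∈ s, a i ^ (n + 1))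
      = (((∑ i ∈ s, (a i).toNNReal ^ (n + 1) : NNReal)) : ℝ≥0∞) := by
    rw [ENNReal.coe_finset_sum]
    refine Finset.sum_congr rfl fun i hi => ?_
    rw [ENNReal.coe_pow, ENNReal.coe_toNNReal (h i hi)]
  rw [h1, h2, ← ENNReal.coe_pow, ← ENNReal.coe_natCast (s.card), ← ENNReal.coe_pow,
    ← ENNReal.coe_mul, ENNReal.coe_le_coe]
  exact pow_sum_le_card_mul_sum_pow (fun i _ => zero_le) n

/-- `∑' w : Fin n → Z, ∏ i, h (w i) = (∑' z, h z) ^ n` in `ℝ≥0∞`. -/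
lemma tsum_pi_pow {Z : Type*} (h : Z → ℝ≥0∞) : ∀ n : ℕ,
    (∑' w : Fin n → Z, ∏ i, h (w i)) = (∑' z, h z) ^ n
  | 0 => by
    rw [tsum_eq_single (fun i : Fin 0 => i.elim0)]
    · simp
    · intro w hw
      exact (hw (funext fun i => i.elim0)).elim
  | n + 1 => by
    rw [← Equiv.tsum_eq (Fin.consEquiv (fun _ : Fin (n + 1) => Z))
      (fun w => ∏ i, h (w i))]
    rw [ENNReal.tsum_prod']
    have key : ∀ (z : Z) (w : Fin n → Z),
        (∏ i, h ((Fin.consEquiv (fun _ : Fin (n + 1) => Z)) (z, w) i))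
          = h z * ∏ i : Fin n, h (w i) := by
      intro z w
      simp only [Fin.consEquiv_apply]
      rw [Fin.prod_univ_succ]
      simp [Fin.cons_zero, Fin.cons_succ]
    calc ∑' (z : Z) (w : Fin n → Z),
          ∏ i, h ((Fin.consEquiv (fun _ : Fin (n + 1) => Z)) (z, w) i)
        = ∑' (z : Z) (w : Fin n → Z), h z * ∏ i : Fin n, h (w i) := by
          refine tsum_congr fun z => tsum_congr fun w => key z w
      _ = ∑' z : Z, h z * ∑' w : Fin n → Z, ∏ i : Fin n, h (w i) := by
          refine tsum_congr fun z => ?_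
          rw [ENNReal.tsum_mul_left]
      _ = (∑' z : Z, h z) * ∑' w : Fin n → Z, ∏ i : Fin n, h (w i) := by
          rw [ENNReal.tsum_mul_right]
      _ = (∑' z : Z, h z) ^ (n + 1) := by
          rw [tsum_pi_pow h n, pow_succ, mul_comm]

/-- If `σ` is `M`-unambiguous, the zero-one classification risk is bounded by
`(c^(2M-2) · R_P(f))^(1/M)`, where `R_P` is the zero-one partial risk over `M`
i.i.d. draws from `D`. -/
theorem stmt1 {X Y S : Type*} [Fintype Y] [DecidableEq Y] [DecidableEq S]
    (c M : ℕ) (hc : Fintype.card Y = c) (hM : 1 ≤ M)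
    (σ : (Fin M → Y) → S)
    (hσ : ∀ y y' : Y, y ≠ y' → σ (fun _ => y) ≠ σ (fun _ => y'))
    (D : PMF (X × Y)) (f : X → Y) :
    (∑' z : X × Y, if f z.1 ≠ z.2 then D z else 0)
      ≤ ((c : ℝ≥0∞) ^ (2 * M - 2) *
          ∑' w : Fin M → X × Y,
            (∏ i, D (w i)) *
              (if σ (fun i => f (w i).1) ≠ σ (fun i => (w i).2) then 1 else 0))
        ^ ((M : ℝ)⁻¹) := by
  classical
  obtain ⟨m, rfl⟩ : ∃ m, M = m + 1 := ⟨M - 1, (Nat.succ_pred_eq_of_pos hM).symm⟩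
  set R : ℝ≥0∞ := ∑' z : X × Y, if f z.1 ≠ z.2 then D z else 0 with hRdef
  set T : ℝ≥0∞ := ∑' w : Fin (m + 1) → X × Y,
      (∏ i, D (w i)) *
        (if σ (fun i => f (w i).1) ≠ σ (fun i => (w i).2) then 1 else 0) with hTdef
  set E : Y × Y → ℝ≥0∞ :=
    fun p => ∑' z : X × Y, if f z.1 = p.2 ∧ z.2 = p.1 then D z else 0 with hEdef
  set s : Finset (Y × Y) := (Finset.univ : Finset Y).offDiag with hsdef
  have i0 : Fin (m + 1) := ⟨0, hM⟩
  -- Step A : R = ∑ p ∈ s, E p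
  have hA : R = ∑ p ∈ s, E p := by
    rw [hEdef, ← Summable.tsum_finsetSum (fun p _ => ENNReal.summable)]
    refine tsum_congr fun z => ?_
    by_cases hz : f z.1 = z.2
    · rw [if_neg (by simp [hz])]
      refine (Finset.sum_eq_zero fun p hp => ?_).symm
      rw [if_neg]
      rintro ⟨h1, h2⟩
      exact (Finset.mem_offDiag.mp hp).2.2 (by rw [← h2, ← hz, h1])
    · rw [if_pos hz]
      have hmem : (z.2, f z.1) ∈ s :=
        Finset.mem_offDiag.mpr ⟨Finset.mem_univ _, Finset.mem_univ _, Ne.symm hz⟩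
      rw [Finset.sum_eq_single_of_mem (z.2, f z.1) hmem, if_pos ⟨rfl, rfl⟩]
      intro p hp hne
      rw [if_neg]
      rintro ⟨h1, h2⟩
      exact hne (Prod.ext h2.symm h1.symm)
  -- product-of-indicator rewriting
  have hprod : ∀ (p : Y × Y) (w : Fin (m + 1) → X × Y),
      (∏ i, if f (w i).1 = p.2 ∧ (w i).2 = p.1 then D (w i) else 0)
        = if (∀ i, f (w i).1 = p.2 ∧ (w i).2 = p.1) then ∏ i, D (w i) else 0 := by
    intro p w
    by_cases hall : ∀ i, f (w i).1 = p.2 ∧ (w i).2 = p.1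
    · rw [if_pos hall]
      exact Finset.prod_congr rfl fun i _ => if_pos (hall i)
    · rw [if_neg hall]
      obtain ⟨i, hi⟩ := not_forall.mp hall
      exact Finset.prod_eq_zero (Finset.mem_univ i) (if_neg hi)
  -- Step B : ∑ p ∈ s, E p ^ (m+1) ≤ T
  have hB : ∑ p ∈ s, E p ^ (m + 1) ≤ T := by
    have hEpow : ∀ p : Y × Y, E p ^ (m + 1)
        = ∑' w : Fin (m + 1) → X × Y,
            ∏ i, (if f (w i).1 = p.2 ∧ (w i).2 = p.1 then D (w i) else 0) := by
      intro p
      exact (tsum_pi_pow (fun z => if f z.1 = p.2 ∧ z.2 = p.1 then D z else 0) (m + 1)).symm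
    calc ∑ p ∈ s, E p ^ (m + 1)
        = ∑' w : Fin (m + 1) → X × Y,
            ∑ p ∈ s, ∏ i, (if f (w i).1 = p.2 ∧ (w i).2 = p.1 then D (w i) else 0) := by
          rw [Summable.tsum_finsetSum (fun p _ => ENNReal.summable)]
          exact Finset.sum_congr rfl fun p _ => hEpow p
      _ ≤ T := by
          refine ENNReal.tsum_le_tsum (fun w => ?_)
          simp only [hprod]
          by_cases h0 : f (w i0).1 = (w i0).2
          · rw [Finset.sum_eq_zero]
            · exact zero_le
            intro p hp
            rw [if_neg]
            intro hall
            obtain ⟨h1, h2⟩ := hall i0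
            exact (Finset.mem_offDiag.mp hp).2.2 (by rw [← h2, ← h0, h1])
          · by_cases hmem : ((w i0).2, f (w i0).1) ∈ s
            · rw [Finset.sum_eq_single_of_mem ((w i0).2, f (w i0).1) hmem
                (fun p hp hne => by
                  rw [if_neg]
                  intro hall
                  obtain ⟨h1, h2⟩ := hall i0
                  exact hne (Prod.ext h2.symm h1.symm))]
              by_cases hall : ∀ i, f (w i).1 = f (w i0).1 ∧ (w i).2 = (w i0).2
              · rw [if_pos hall]
                have hσne : σ (fun i => f (w i).1) ≠ σ (fun i => (w i).2) := by
                  have e1 : (fun i => f (w i).1) = fun _ => f (w i0).1 :=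
                    funext fun i => (hall i).1
                  have e2 : (fun i => (w i).2) = fun _ => (w i0).2 :=
                    funext fun i => (hall i).2
                  rw [e1, e2]
                  exact hσ _ _ h0
                rw [if_pos hσne, mul_one]
              · rw [if_neg hall]
                exact zero_le
            · exact absurd (Finset.mem_offDiag.mpr
                ⟨Finset.mem_univ _, Finset.mem_univ _, fun hq => h0 hq.symm⟩) hmem
  -- E p is finite
  have hEfin : ∀ p ∈ s, E p ≠ ∞ := by
    intro p _
    have hle : E p ≤ ∑' z : X × Y, D z := by
      refine ENNReal.tsum_le_tsum (fun z => ?_)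
      split <;> simp
    rw [D.tsum_coe] at hle
    exact (hle.trans_lt (by norm_num)).ne
  -- Step C : R ^ (m+1) ≤ c^(2(m+1)-2) * T
  have hC : R ^ (m + 1) ≤ (c : ℝ≥0∞) ^ (2 * (m + 1) - 2) * T := by
    rw [hA]
    calc (∑ p ∈ s, E p) ^ (m + 1)
        ≤ (s.card : ℝ≥0∞) ^ m * ∑ p ∈ s, E p ^ (m + 1) := pm_aux s E hEfin m
      _ ≤ ((c : ℝ≥0∞) ^ 2) ^ m * T := by
          gcongr
          have hcard : s.card ≤ c * c := by
            have := Finset.card_le_univ s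
            simpa [Fintype.card_prod, hc] using this
          calc (s.card : ℝ≥0∞) ≤ ((c * c : ℕ) : ℝ≥0∞) := by exact_mod_cast hcard
            _ = (c : ℝ≥0∞) ^ 2 := by push_cast; ring
      _ = (c : ℝ≥0∞) ^ (2 * (m + 1) - 2) * T := by
          have h' : 2 * (m + 1) - 2 = 2 * m := by omega
          rw [h', ← pow_mul]
  -- conclude via rpow
  have hMne : ((m + 1 : ℕ) : ℝ) ≠ 0 := by positivity
  calc R = (R ^ (m + 1)) ^ (((m + 1 : ℕ) : ℝ))⁻¹ := by
        rw [← ENNReal.rpow_natCast R (m + 1), ← ENNReal.rpow_mul,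
          mul_inv_cancel₀ hMne, ENNReal.rpow_one]
    _ ≤ ((c : ℝ≥0∞) ^ (2 * (m + 1) - 2) * T) ^ (((m + 1 : ℕ) : ℝ))⁻¹ :=
        ENNReal.rpow_le_rpow hC (by positivity)
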